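/- arXiv:1305.2143 — 3 statements merged into one kernel-verified Lean document; each statement's English description precedes it below -/
import Mathlib

section
/- For every integer n ≥ 0, the finite-sum identity Σ_{k=0}^{n} (1/2^{4k})·C(2k,k)²·(1/(2n−2k+1)) = Σ_{k=0}^{n} (1/2^{4k})·C(2k,k)²·(1/(n+k+1)) holds, where C(2k,k) denotes the central binomial coefficient. -/
namespace WZ8

def c (k : ℕ) : ℚ := (1 / 2 ^ (4 * k) : ℚ) * (Nat.choose (2 * k) k : ℚ) ^ 2

lemma c_succ (k : ℕ) : c (k + 1) = c k * ((2 * (k:ℚ) + 1) ^ 2 / (4 * ((k:ℚ) + 1) ^ 2)) := by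
  have h := Nat.succ_mul_centralBinom_succ k
  have h2 : ((k:ℚ) + 1) * (Nat.choose (2 * (k+1)) (k+1) : ℚ)
      = 2 * (2 * k + 1) * (Nat.choose (2 * k) k : ℚ) := by
    have := congrArg (fun m : ℕ => (m : ℚ)) h
    push_cast [Nat.centralBinom] at this
    linarith
  have hk1 : ((k:ℚ) + 1) ≠ 0 := by positivity
  have h3 : (Nat.choose (2 * (k+1)) (k+1) : ℚ)
      = 2 * (2 * k + 1) * (Nat.choose (2 * k) k : ℚ) / ((k:ℚ) + 1) := by
    field_simp at h2 ⊢
    linarith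
  simp only [c, h3]
  have h4 : (2:ℚ) ^ (4 * (k+1)) = 2 ^ (4 * k) * 16 := by ring
  rw [h4]
  field_simp
  ring

def P (x y : ℚ) : ℚ :=
  y^2 * (228 + 796*x + 840*x^2 + 344*x^3 + 48*x^4)
  + y^3 * (-500 - 768*x - 312*x^2 - 32*x^3)
  + y^4 * (120 + 72*x) + y^5 * (-40 + 32*x) - 48 * y^6

def Q (x y : ℚ) : ℚ :=
  (2*x - 2*y + 1) * (2*x - 2*y + 3) * (2*x - 2*y + 5) * (x + y + 1) * (x + y + 2) * (x + y + 3)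

set_option maxRecDepth 100000 in
lemma core (x y : ℚ)
    (h1 : 2*x - 2*y + 1 ≠ 0) (h2 : 2*x - 2*y + 3 ≠ 0) (h3 : 2*x - 2*y + 5 ≠ 0)
    (h0 : 2*x - 2*y - 1 ≠ 0)
    (g1 : x + y + 1 ≠ 0) (g2 : x + y + 2 ≠ 0) (g3 : x + y + 3 ≠ 0) (g4 : x + y + 4 ≠ 0)
    (hy : y + 1 ≠ 0) :
    4*(x+1)^2 * (1/(2*x - 2*y + 1) - 1/(x + y + 1))
      - (8*x^2 + 28*x + 25) * (1/(2*(x+1) - 2*y + 1) - 1/((x+1) + y + 1))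
      + (2*x+5)^2 * (1/(2*(x+2) - 2*y + 1) - 1/((x+2) + y + 1))
    = (2*y+1)^2 / (4*(y+1)^2) * (P x (y+1) / Q x (y+1)) - P x y / Q x y := by
  have q1 : Q x y ≠ 0 := by
    unfold Q
    exact mul_ne_zero (mul_ne_zero (mul_ne_zero (mul_ne_zero (mul_ne_zero h1 h2) h3) g1) g2) g3
  have q2 : Q x (y+1) ≠ 0 := by
    unfold Q
    have a1 : 2*x - 2*(y+1) + 1 ≠ 0 := by intro h; apply h0; linarith
    have a2 : 2*x - 2*(y+1) + 3 ≠ 0 := by intro h; apply h1; linarith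
    have a3 : 2*x - 2*(y+1) + 5 ≠ 0 := by intro h; apply h2; linarith
    have b1 : x + (y+1) + 1 ≠ 0 := by intro h; apply g2; linarith
    have b2 : x + (y+1) + 2 ≠ 0 := by intro h; apply g3; linarith
    have b3 : x + (y+1) + 3 ≠ 0 := by intro h; apply g4; linarith
    exact mul_ne_zero (mul_ne_zero (mul_ne_zero (mul_ne_zero (mul_ne_zero a1 a2) a3) b1) b2) b3
  have h2' : 2*(x+1) - 2*y + 1 ≠ 0 := by intro h; apply h2; linarith
  have h3' : 2*(x+2) - 2*y + 1 ≠ 0 := by intro h; apply h3; linarith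
  have g2' : (x+1) + y + 1 ≠ 0 := by intro h; apply g2; linarith
  have g3' : (x+2) + y + 1 ≠ 0 := by intro h; apply g3; linarith
  have a1 : 2*x - 2*(y+1) + 1 ≠ 0 := by intro h; apply h0; linarith
  have a2 : 2*x - 2*(y+1) + 3 ≠ 0 := by intro h; apply h1; linarith
  have a3 : 2*x - 2*(y+1) + 5 ≠ 0 := by intro h; apply h2; linarith
  have b1 : x + (y+1) + 1 ≠ 0 := by intro h; apply g2; linarith
  have b2 : x + (y+1) + 2 ≠ 0 := by intro h; apply g3; linarith
  have b3 : x + (y+1) + 3 ≠ 0 := by intro h; apply g4; linarith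
  have k0 : 2*(x-y)+1 ≠ 0 := by intro h; apply h1; linarith
  have k1 : 2*(x-y)+3 ≠ 0 := by intro h; apply h2; linarith
  have k2 : 2*(x-y)+5 ≠ 0 := by intro h; apply h3; linarith
  have k3 : 2*(x+1-y)+1 ≠ 0 := by intro h; apply h2; linarith
  have k4 : 2*(x+2-y)+1 ≠ 0 := by intro h; apply h3; linarith
  have k5 : 2*(x-(y+1))+1 ≠ 0 := by intro h; apply h0; linarith
  have k6 : 2*(x-(y+1))+3 ≠ 0 := by intro h; apply h1; linarith
  have k7 : 2*(x-(y+1))+5 ≠ 0 := by intro h; apply h2; linarith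
  unfold P Q at *
  field_simp
  ring

lemma core2 (x : ℚ) (e1 : x+1 ≠ 0) (e2 : x+2 ≠ 0) (e3 : x+3 ≠ 0)
    (f3 : 2*x+3 ≠ 0) (f5 : 2*x+5 ≠ 0) (f2 : 2*x+2 ≠ 0) (f4 : 2*x+4 ≠ 0) (f6 : 2*x+6 ≠ 0) :
    (2*x+1)^2*(2*x+3)^2*(2*x+5)^2 / (64*(x+1)^2*(x+2)^2*(x+3)^2) * (P x (x+3) / Q x (x+3))
    = 4*(x+1)^2 * ( (2*x+1)^2/(4*(x+1)^2) * (1/(2*x - 2*(x+1) + 1) - 1/(x + (x+1) + 1))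
        + (2*x+1)^2*(2*x+3)^2/(16*(x+1)^2*(x+2)^2) * (1/(2*x - 2*(x+2) + 1) - 1/(x + (x+2) + 1)) )
      - (8*x^2 + 28*x + 25) *
        ( (2*x+1)^2*(2*x+3)^2/(16*(x+1)^2*(x+2)^2) * (1/(2*(x+1) - 2*(x+2) + 1) - 1/((x+1) + (x+2) + 1)) ) := by
  have q : Q x (x+3) ≠ 0 := by
    unfold Q
    have a1 : 2*x - 2*(x+3) + 1 ≠ 0 := by intro h; linarith
    have a2 : 2*x - 2*(x+3) + 3 ≠ 0 := by intro h; linarith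
    have a3 : 2*x - 2*(x+3) + 5 ≠ 0 := by intro h; linarith
    have b1 : x + (x+3) + 1 ≠ 0 := by intro h; apply f4; linarith
    have b2 : x + (x+3) + 2 ≠ 0 := by intro h; apply f5; linarith
    have b3 : x + (x+3) + 3 ≠ 0 := by intro h; apply f6; linarith
    exact mul_ne_zero (mul_ne_zero (mul_ne_zero (mul_ne_zero (mul_ne_zero a1 a2) a3) b1) b2) b3
  have d1 : 2*x - 2*(x+1) + 1 ≠ 0 := by intro h; linarith
  have d2 : 2*x - 2*(x+2) + 1 ≠ 0 := by intro h; linarith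
  have d3 : 2*(x+1) - 2*(x+2) + 1 ≠ 0 := by intro h; linarith
  have s1 : x + (x+1) + 1 ≠ 0 := by intro h; apply f2; linarith
  have s2 : x + (x+2) + 1 ≠ 0 := by intro h; apply f3; linarith
  have s3 : (x+1) + (x+2) + 1 ≠ 0 := by intro h; apply f4; linarith
  have a1 : 2*x - 2*(x+3) + 1 ≠ 0 := by intro h; linarith
  have a2 : 2*x - 2*(x+3) + 3 ≠ 0 := by intro h; linarith
  have a3 : 2*x - 2*(x+3) + 5 ≠ 0 := by intro h; linarith
  have b1 : x + (x+3) + 1 ≠ 0 := by intro h; apply f4; linarith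
  have b2 : x + (x+3) + 2 ≠ 0 := by intro h; apply f5; linarith
  have b3 : x + (x+3) + 3 ≠ 0 := by intro h; apply f6; linarith
  unfold P Q at *
  field_simp
  ring

def d (n k : ℕ) : ℚ := c k * (1 / (2 * (n : ℚ) - 2 * (k : ℚ) + 1) - 1 / ((n : ℚ) + (k : ℚ) + 1))

def G (n k : ℕ) : ℚ := c k * (P (n : ℚ) (k : ℚ) / Q (n : ℚ) (k : ℚ))

lemma oddq (a b : ℕ) : 2*(a:ℚ) - 2*(b:ℚ) + 1 ≠ 0 := by
  intro h
  have h1 : ((2*(a:ℤ) - 2*(b:ℤ) + 1 : ℤ) : ℚ) = 0 := by push_cast; linarith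
  have h2 : (2*(a:ℤ) - 2*(b:ℤ) + 1) = 0 := by exact_mod_cast h1
  omega

lemma cert (n k : ℕ) :
    4*((n:ℚ)+1)^2 * d n k - (8*(n:ℚ)^2 + 28*(n:ℚ) + 25) * d (n+1) k
      + (2*(n:ℚ)+5)^2 * d (n+2) k = G n (k+1) - G n k := by
  have h1 : 2*(n:ℚ) - 2*(k:ℚ) + 1 ≠ 0 := oddq n k
  have h2 : 2*(n:ℚ) - 2*(k:ℚ) + 3 ≠ 0 := by
    have := oddq (n+1) k; push_cast at this; intro h; apply this; linarith
  have h3 : 2*(n:ℚ) - 2*(k:ℚ) + 5 ≠ 0 := by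
    have := oddq (n+2) k; push_cast at this; intro h; apply this; linarith
  have h0 : 2*(n:ℚ) - 2*(k:ℚ) - 1 ≠ 0 := by
    have := oddq n (k+1); push_cast at this; intro h; apply this; linarith
  have g1 : (n:ℚ) + (k:ℚ) + 1 ≠ 0 := by positivity
  have g2 : (n:ℚ) + (k:ℚ) + 2 ≠ 0 := by positivity
  have g3 : (n:ℚ) + (k:ℚ) + 3 ≠ 0 := by positivity
  have g4 : (n:ℚ) + (k:ℚ) + 4 ≠ 0 := by positivity
  have hy : (k:ℚ) + 1 ≠ 0 := by positivity
  have key := core (n:ℚ) (k:ℚ) h1 h2 h3 h0 g1 g2 g3 g4 hy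
  simp only [d, G, c_succ]
  push_cast
  linear_combination (c k) * key

lemma c_one (n : ℕ) :
    c (n+1) = c n * ((2*(n:ℚ)+1)^2 / (4*((n:ℚ)+1)^2)) := c_succ n

lemma c_two (n : ℕ) :
    c (n+2) = c n * ((2*(n:ℚ)+1)^2*(2*(n:ℚ)+3)^2 / (16*((n:ℚ)+1)^2*((n:ℚ)+2)^2)) := by
  rw [show n+2 = (n+1)+1 from rfl, c_succ (n+1), c_succ n]
  have e1 : ((n:ℚ)+1) ≠ 0 := by positivity
  have e2 : ((n:ℚ)+2) ≠ 0 := by positivity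
  push_cast
  field_simp
  ring

lemma c_three (n : ℕ) :
    c (n+3) = c n * ((2*(n:ℚ)+1)^2*(2*(n:ℚ)+3)^2*(2*(n:ℚ)+5)^2
      / (64*((n:ℚ)+1)^2*((n:ℚ)+2)^2*((n:ℚ)+3)^2)) := by
  rw [show n+3 = (n+2)+1 from rfl, c_succ (n+2), c_two n]
  have e1 : ((n:ℚ)+1) ≠ 0 := by positivity
  have e2 : ((n:ℚ)+2) ≠ 0 := by positivity
  have e3 : ((n:ℚ)+3) ≠ 0 := by positivity
  push_cast
  field_simp
  ring

lemma boundary (n : ℕ) :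
    G n (n+3) = 4*((n:ℚ)+1)^2 * (d n (n+1) + d n (n+2))
      - (8*(n:ℚ)^2 + 28*(n:ℚ) + 25) * d (n+1) (n+2) := by
  have e1 : ((n:ℚ)+1) ≠ 0 := by positivity
  have e2 : ((n:ℚ)+2) ≠ 0 := by positivity
  have e3 : ((n:ℚ)+3) ≠ 0 := by positivity
  have f2 : (2*(n:ℚ)+2) ≠ 0 := by positivity
  have f3 : (2*(n:ℚ)+3) ≠ 0 := by positivity
  have f4 : (2*(n:ℚ)+4) ≠ 0 := by positivity
  have f5 : (2*(n:ℚ)+5) ≠ 0 := by positivity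
  have f6 : (2*(n:ℚ)+6) ≠ 0 := by positivity
  have key := core2 (n:ℚ) e1 e2 e3 f3 f5 f2 f4 f6
  simp only [G, d, c_three, c_two, c_one]
  push_cast
  linear_combination (c n) * key

lemma G_zero (n : ℕ) : G n 0 = 0 := by
  simp [G, P]

def S (n : ℕ) : ℚ := ∑ k ∈ Finset.range (n+1), d n k

lemma S_rec (n : ℕ) :
    4*((n:ℚ)+1)^2 * S n - (8*(n:ℚ)^2 + 28*(n:ℚ) + 25) * S (n+1)
      + (2*(n:ℚ)+5)^2 * S (n+2) = 0 := by
  have tele : ∑ k ∈ Finset.range (n+3), (G n (k+1) - G n k) = G n (n+3) - G n 0 :=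
    Finset.sum_range_sub (G n) (n+3)
  have hsum : ∑ k ∈ Finset.range (n+3),
      (4*((n:ℚ)+1)^2 * d n k - (8*(n:ℚ)^2 + 28*(n:ℚ) + 25) * d (n+1) k
        + (2*(n:ℚ)+5)^2 * d (n+2) k) = G n (n+3) - G n 0 := by
    rw [← tele]
    exact Finset.sum_congr rfl fun k _ => cert n k
  have split : ∑ k ∈ Finset.range (n+3),
      (4*((n:ℚ)+1)^2 * d n k - (8*(n:ℚ)^2 + 28*(n:ℚ) + 25) * d (n+1) k
        + (2*(n:ℚ)+5)^2 * d (n+2) k)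
      = 4*((n:ℚ)+1)^2 * (∑ k ∈ Finset.range (n+3), d n k)
        - (8*(n:ℚ)^2 + 28*(n:ℚ) + 25) * (∑ k ∈ Finset.range (n+3), d (n+1) k)
        + (2*(n:ℚ)+5)^2 * (∑ k ∈ Finset.range (n+3), d (n+2) k) := by
    simp only [Finset.sum_add_distrib, Finset.sum_sub_distrib, Finset.mul_sum]
  have r1 : ∑ k ∈ Finset.range (n+3), d n k = S n + d n (n+1) + d n (n+2) := by
    rw [show n+3 = (n+2)+1 from rfl, Finset.sum_range_succ,
      show n+2 = (n+1)+1 from rfl, Finset.sum_range_succ]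
    rfl
  have r2 : ∑ k ∈ Finset.range (n+3), d (n+1) k = S (n+1) + d (n+1) (n+2) := by
    rw [show n+3 = (n+2)+1 from rfl, Finset.sum_range_succ]
    rfl
  have r3 : ∑ k ∈ Finset.range (n+3), d (n+2) k = S (n+2) := rfl
  rw [split, r1, r2, r3, G_zero, boundary n] at hsum
  linarith

lemma S_zero : ∀ n, S n = 0 := by
  intro n
  induction n using Nat.twoStepInduction with
  | zero => norm_num [S, d, c, Finset.sum_range_one]
  | one =>
      norm_num [S, d, c, Finset.sum_range_succ, Finset.sum_range_one, Nat.choose]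
  | more m ih1 ih2 =>
      have h := S_rec m
      rw [ih1, ih2] at h
      have h5 : ((2*(m:ℚ)+5)^2) ≠ 0 := by positivity
      have := mul_eq_zero.mp (by linarith : (2*(m:ℚ)+5)^2 * S (m+2) = 0)
      tauto

end WZ8

/-- Σ_{k=0}^{n} 2^{−4k} C(2k,k)² /(2n−2k+1) = Σ_{k=0}^{n} 2^{−4k} C(2k,k)² /(n+k+1). -/
theorem wz_sum_identity_one (n : ℕ) :
    ∑ k ∈ Finset.range (n + 1),
        (1 / 2 ^ (4 * k) : ℚ) * (Nat.choose (2 * k) k : ℚ) ^ 2 *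
          (1 / (2 * (n : ℚ) - 2 * (k : ℚ) + 1)) =
      ∑ k ∈ Finset.range (n + 1),
        (1 / 2 ^ (4 * k) : ℚ) * (Nat.choose (2 * k) k : ℚ) ^ 2 *
          (1 / ((n : ℚ) + (k : ℚ) + 1)) := by
  have h := WZ8.S_zero n
  rw [← sub_eq_zero, ← Finset.sum_sub_distrib]
  have hterm : ∀ k, (1 / 2 ^ (4 * k) : ℚ) * (Nat.choose (2 * k) k : ℚ) ^ 2 *
          (1 / (2 * (n : ℚ) - 2 * (k : ℚ) + 1))
        - (1 / 2 ^ (4 * k) : ℚ) * (Nat.choose (2 * k) k : ℚ) ^ 2 *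
          (1 / ((n : ℚ) + (k : ℚ) + 1)) = WZ8.d n k := by
    intro k
    simp only [WZ8.d, WZ8.c, mul_sub]
  simp only [hterm]
  exact h
end

section
/- For every integer n ≥ 0, the finite-sum identity Σ_{k=0}^{n} (1/2^{4k})·C(2k,k)²·(1/(n+k+1)) = (2^{4n}/((2n+1)²·C(2n,n)²))·Σ_{k=0}^{n} ((4k+1)/2^{8k})·C(2k,k)⁴ holds, where C(2k,k) denotes the central binomial coefficient. -/
open Finset

private def bq (k : ℕ) : ℚ := ((2 * k).choose k : ℚ)

private lemma bq_ne (k : ℕ) : bq k ≠ 0 := by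
  have : 0 < (2 * k).choose k := Nat.choose_pos (by omega)
  simp [bq]
  omega

private lemma bq_rec (k : ℕ) : ((k : ℚ) + 1) * bq (k + 1) = 2 * (2 * k + 1) * bq k := by
  have h := Nat.succ_mul_centralBinom_succ k
  have h2 : (k + 1) * (2 * (k + 1)).choose (k + 1) = 2 * (2 * k + 1) * (2 * k).choose k := by
    simpa [Nat.centralBinom] using h
  have := congrArg (fun m : ℕ => (m : ℚ)) h2
  push_cast at this
  push_cast [bq]
  linarith

private def Fq (n k : ℕ) : ℚ :=
  (2 * n + 1) ^ 2 * (bq n) ^ 2 / 16 ^ n * ((bq k) ^ 2 / (16 ^ k * ((n : ℚ) + k + 1)))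

private def Hq (n k : ℕ) : ℚ :=
  (2 * n + 1) ^ 2 * (bq n) ^ 2 / 16 ^ n *
    ((bq k) ^ 2 * k ^ 2 / (16 ^ k * ((n : ℚ) + 1) ^ 2 * ((n : ℚ) + k + 1)))

private lemma cast_ne (m : ℕ) : ((m : ℚ) + 1) ≠ 0 := by positivity

private lemma pointwise (n k : ℕ) : Fq (n + 1) k - Fq n k = Hq n (k + 1) - Hq n k := by
  have hbn := bq_ne n
  have hbk := bq_ne k
  have hrn := bq_rec n
  have hrk := bq_rec k
  have h1 : bq (n + 1) = 2 * (2 * n + 1) * bq n / ((n : ℚ) + 1) := by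
    field_simp at hrn ⊢; linarith
  have h2 : bq (k + 1) = 2 * (2 * k + 1) * bq k / ((k : ℚ) + 1) := by
    field_simp at hrk ⊢; linarith
  simp only [Fq, Hq, h1, h2]
  have d1 : ((n : ℚ) + 1 + k + 1) ≠ 0 := by positivity
  have d2 : ((n : ℚ) + k + 1) ≠ 0 := by positivity
  have d3 : ((n : ℚ) + (k + 1) + 1) ≠ 0 := by positivity
  have d4 : ((16 : ℚ) ^ n) ≠ 0 := by positivity
  have d5 : ((16 : ℚ) ^ k) ≠ 0 := by positivity
  push_cast
  field_simp
  ring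

private lemma boundary (n : ℕ) :
    Fq (n + 1) (n + 1) + (Hq n (n + 1) - Hq n 0) =
      (4 * ((n : ℚ) + 1) + 1) * (bq (n + 1)) ^ 4 / 256 ^ (n + 1) := by
  have hbn := bq_ne n
  have hrn := bq_rec n
  have h1 : bq (n + 1) = 2 * (2 * n + 1) * bq n / ((n : ℚ) + 1) := by
    field_simp at hrn ⊢; linarith
  simp only [Fq, Hq, h1]
  have d1 : ((n : ℚ) + 1 + (n + 1) + 1) ≠ 0 := by positivity
  have d2 : ((n : ℚ) + (n + 1) + 1) ≠ 0 := by positivity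
  have d4 : ((16 : ℚ) ^ n) ≠ 0 := by positivity
  have d6 : ((256 : ℚ) ^ n) ≠ 0 := by positivity
  have h256 : ((256 : ℚ)) ^ (n + 1) = 16 ^ (n + 1) * 16 ^ (n + 1) := by
    rw [← mul_pow]; norm_num
  rw [h256]
  push_cast
  field_simp
  ring

private lemma main_lemma (n : ℕ) :
    (2 * (n : ℚ) + 1) ^ 2 * (bq n) ^ 2 / 16 ^ n *
        ∑ k ∈ range (n + 1), (bq k) ^ 2 / (16 ^ k * ((n : ℚ) + k + 1)) =
      ∑ k ∈ range (n + 1), (4 * (k : ℚ) + 1) * (bq k) ^ 4 / 256 ^ k := by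
  induction n with
  | zero => simp [bq]
  | succ n ih =>
      have hL : (2 * ((n : ℚ) + 1) + 1) ^ 2 * (bq (n + 1)) ^ 2 / 16 ^ (n + 1) *
          ∑ k ∈ range (n + 1 + 1), (bq k) ^ 2 / (16 ^ k * (((n : ℚ) + 1) + k + 1)) =
          ∑ k ∈ range (n + 1 + 1), Fq (n + 1) k := by
        rw [Finset.mul_sum]
        refine Finset.sum_congr rfl fun k _ => ?_
        simp only [Fq]
        push_cast
        ring
      have hL' : (2 * (n : ℚ) + 1) ^ 2 * (bq n) ^ 2 / 16 ^ n *
          ∑ k ∈ range (n + 1), (bq k) ^ 2 / (16 ^ k * ((n : ℚ) + k + 1)) =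
          ∑ k ∈ range (n + 1), Fq n k := by
        rw [Finset.mul_sum]
        refine Finset.sum_congr rfl fun k _ => ?_
        simp only [Fq]
      have tele : ∑ k ∈ range (n + 1), (Hq n (k + 1) - Hq n k) = Hq n (n + 1) - Hq n 0 :=
        Finset.sum_range_sub (Hq n) (n + 1)
      have step : ∑ k ∈ range (n + 1 + 1), Fq (n + 1) k =
          ∑ k ∈ range (n + 1), Fq n k +
            (Fq (n + 1) (n + 1) + (Hq n (n + 1) - Hq n 0)) := by
        rw [Finset.sum_range_succ]
        have : ∑ k ∈ range (n + 1), Fq (n + 1) k =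
            ∑ k ∈ range (n + 1), Fq n k + ∑ k ∈ range (n + 1), (Hq n (k + 1) - Hq n k) := by
          rw [← Finset.sum_add_distrib]
          refine Finset.sum_congr rfl fun k _ => ?_
          have := pointwise n k
          linarith
        rw [this, tele]; ring
      push_cast
      rw [hL, step, ← hL', ih]
      conv_rhs => rw [Finset.sum_range_succ]
      have hb := boundary n
      push_cast at hb ⊢
      linarith

/-- Σ_{k=0}^{n} 2^{−4k} C(2k,k)² /(n+k+1)
    = (2^{4n}/((2n+1)² C(2n,n)²)) Σ_{k=0}^{n} (4k+1) 2^{−8k} C(2k,k)⁴. -/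
theorem wz_sum_identity_two (n : ℕ) :
    ∑ k ∈ Finset.range (n + 1),
        (1 / 2 ^ (4 * k) : ℚ) * (Nat.choose (2 * k) k : ℚ) ^ 2 *
          (1 / ((n : ℚ) + (k : ℚ) + 1)) =
      2 ^ (4 * n) / ((2 * (n : ℚ) + 1) ^ 2 * (Nat.choose (2 * n) n : ℚ) ^ 2) *
        ∑ k ∈ Finset.range (n + 1),
          (4 * (k : ℚ) + 1) / 2 ^ (8 * k) * (Nat.choose (2 * k) k : ℚ) ^ 4 := by
  have hpow4 : ∀ k : ℕ, (2 : ℚ) ^ (4 * k) = 16 ^ k := by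
    intro k; rw [pow_mul]; norm_num
  have hpow8 : ∀ k : ℕ, (2 : ℚ) ^ (8 * k) = 256 ^ k := by
    intro k; rw [pow_mul]; norm_num
  have hc : (2 * (n : ℚ) + 1) ^ 2 * (bq n) ^ 2 / 16 ^ n ≠ 0 := by
    have := bq_ne n
    have h1 : (2 * (n : ℚ) + 1) ≠ 0 := by positivity
    have h2 : ((16 : ℚ) ^ n) ≠ 0 := by positivity
    exact div_ne_zero (mul_ne_zero (pow_ne_zero _ h1) (pow_ne_zero _ this)) h2
  have key := main_lemma n
  have e1 : ∑ k ∈ Finset.range (n + 1),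
      (1 / 2 ^ (4 * k) : ℚ) * (Nat.choose (2 * k) k : ℚ) ^ 2 * (1 / ((n : ℚ) + (k : ℚ) + 1)) =
      ∑ k ∈ range (n + 1), (bq k) ^ 2 / (16 ^ k * ((n : ℚ) + k + 1)) := by
    refine Finset.sum_congr rfl fun k _ => ?_
    rw [hpow4 k]
    simp only [bq]
    have h1 : ((n : ℚ) + k + 1) ≠ 0 := by positivity
    have h2 : ((16 : ℚ) ^ k) ≠ 0 := by positivity
    field_simp
  have e2 : ∑ k ∈ Finset.range (n + 1),
      (4 * (k : ℚ) + 1) / 2 ^ (8 * k) * (Nat.choose (2 * k) k : ℚ) ^ 4 =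
      ∑ k ∈ range (n + 1), (4 * (k : ℚ) + 1) * (bq k) ^ 4 / 256 ^ k := by
    refine Finset.sum_congr rfl fun k _ => ?_
    rw [hpow8 k]
    simp only [bq]
    ring
  rw [e1, e2, ← key, hpow4 n]
  have hbn := bq_ne n
  simp only [bq] at hbn ⊢
  have h1 : (2 * (n : ℚ) + 1) ≠ 0 := by positivity
  have h2 : ((16 : ℚ) ^ n) ≠ 0 := by positivity
  field_simp
end

section
/- For every continuous function F : [0,1] → ℝ, one has ∫₀¹∫₀¹ F(|cos(2πt)·cos(2πs)|) ds dt = (4/π²)·∫₀¹ F(k)·K'(k) dk, where the right-hand integral is a convergent (Lebesgue) integral on (0,1). -/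
set_option maxHeartbeats 1000000


open MeasureTheory

/-- complete elliptic integral of the first kind, K(k) -/
noncomputable def Kel (k : ℝ) : ℝ :=
  ∫ θ in (0:ℝ)..(Real.pi / 2), (1 - k ^ 2 * Real.sin θ ^ 2) ^ (-(1:ℝ) / 2)

/-- K'(k) = K(√(1−k²)) -/
noncomputable def Kel' (k : ℝ) : ℝ := Kel (Real.sqrt (1 - k ^ 2))


open Real Set ContinuousLinearMap MeasureTheory


noncomputable def Phi (p : ℝ × ℝ) : ℝ × ℝ :=
  (arcsin (Real.sqrt (1 - p.1 ^ 2) * Real.sin p.2),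
   arccos (p.1 / Real.sqrt (1 - (1 - p.1 ^ 2) * Real.sin p.2 ^ 2)))

noncomputable def A (x : ℝ × ℝ) : ℝ × ℝ →L[ℝ] ℝ × ℝ :=
  let k := x.1; let ψ := x.2
  let S := Real.sin ψ; let C := Real.cos ψ
  let c := Real.sqrt (1 - k ^ 2); let R := Real.sqrt (1 - (1 - k ^ 2) * S ^ 2)
  ((-(k * S) / (c * R)) • fst ℝ ℝ ℝ + (c * C / R) • snd ℝ ℝ ℝ).prod
    ((-C / (c * R ^ 2)) • fst ℝ ℝ ℝ + (-(k * c * S) / R ^ 2) • snd ℝ ℝ ℝ)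

lemma hasFDerivAt_Phi {x : ℝ × ℝ} (hx : x ∈ Ioo (0:ℝ) 1 ×ˢ Ioo (0:ℝ) (π/2)) :
    HasFDerivAt Phi (A x) x := by
  obtain ⟨⟨hk0, hk1⟩, hψ0, hψ1⟩ := hx
  set k := x.1; set ψ := x.2
  have hS0 : 0 < Real.sin ψ := Real.sin_pos_of_pos_of_lt_pi hψ0 (by linarith [pi_pos])
  have hS1 : Real.sin ψ < 1 := by
    have := Real.strictMonoOn_sin ⟨by linarith [pi_pos], by linarith⟩
      ⟨by linarith [pi_pos], le_refl _⟩ hψ1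
    simpa using this
  have hC0 : 0 < Real.cos ψ := Real.cos_pos_of_mem_Ioo ⟨by linarith [pi_pos], hψ1⟩
  have hc2 : (0:ℝ) < 1 - k ^ 2 := by nlinarith
  have hcpos : 0 < Real.sqrt (1 - k ^ 2) := Real.sqrt_pos.2 hc2
  have hcsq : Real.sqrt (1 - k ^ 2) ^ 2 = 1 - k ^ 2 := Real.sq_sqrt hc2.le
  have hclt1 : Real.sqrt (1 - k ^ 2) ≤ 1 := by
    exact Real.sqrt_le_one.2 (by nlinarith)
  have hvpos : (0:ℝ) < 1 - (1 - k ^ 2) * Real.sin ψ ^ 2 := by nlinarith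
  have hRpos : 0 < Real.sqrt (1 - (1 - k ^ 2) * Real.sin ψ ^ 2) := Real.sqrt_pos.2 hvpos
  have hRsq : Real.sqrt (1 - (1 - k ^ 2) * Real.sin ψ ^ 2) ^ 2
      = 1 - (1 - k ^ 2) * Real.sin ψ ^ 2 := Real.sq_sqrt hvpos.le
  set c := Real.sqrt (1 - k ^ 2)
  set S := Real.sin ψ
  set C := Real.cos ψ
  set R := Real.sqrt (1 - (1 - k ^ 2) * S ^ 2)
  -- derivative of p ↦ √(1 - p.1^2)
  have hc : HasFDerivAt (fun p : ℝ × ℝ => Real.sqrt (1 - p.1 ^ 2))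
      ((1 / (2 * c) * -(2 * k)) • fst ℝ ℝ ℝ) x := by
    have h1 : HasDerivAt (fun y : ℝ => 1 - y ^ 2) (-(2 * k)) k := by
      simpa using ((hasDerivAt_pow 2 k).const_sub 1)
    have h2 : HasDerivAt (fun y : ℝ => Real.sqrt (1 - y ^ 2)) (1 / (2 * c) * -(2 * k)) k :=
      (Real.hasDerivAt_sqrt hc2.ne').comp k h1
    have := h2.comp_hasFDerivAt x (hasFDerivAt_fst (𝕜 := ℝ) (p := x)); exact this
  -- derivative of p ↦ sin p.2
  have hsin : HasFDerivAt (fun p : ℝ × ℝ => Real.sin p.2) (C • snd ℝ ℝ ℝ) x :=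
    by have := (Real.hasDerivAt_sin ψ).comp_hasFDerivAt x (hasFDerivAt_snd (𝕜 := ℝ) (p := x)); exact this
  -- derivative of u = c(p) * sin p.2
  have hu : HasFDerivAt (fun p : ℝ × ℝ => Real.sqrt (1 - p.1 ^ 2) * Real.sin p.2)
      (c • (C • snd ℝ ℝ ℝ) + S • ((1 / (2 * c) * -(2 * k)) • fst ℝ ℝ ℝ)) x := hc.mul hsin
  -- arcsin composition
  have harg : c * S < 1 := by nlinarith
  have harg0 : 0 < c * S := mul_pos hcpos hS0
  have hΦ1 : HasFDerivAt (fun p : ℝ × ℝ => arcsin (Real.sqrt (1 - p.1 ^ 2) * Real.sin p.2))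
      ((1 / Real.sqrt (1 - (c * S) ^ 2)) •
        (c • (C • snd ℝ ℝ ℝ) + S • ((1 / (2 * c) * -(2 * k)) • fst ℝ ℝ ℝ))) x :=
    by have := (Real.hasDerivAt_arcsin (by linarith) harg.ne).comp_hasFDerivAt x hu; exact this
  -- derivative of v = 1 - (1 - p.1^2) * sin p.2 ^ 2
  have hq : HasFDerivAt (fun p : ℝ × ℝ => 1 - p.1 ^ 2) ((-(2 * k)) • fst ℝ ℝ ℝ) x := by
    have h1 : HasDerivAt (fun y : ℝ => 1 - y ^ 2) (-(2 * k)) k := by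
      simpa using ((hasDerivAt_pow 2 k).const_sub 1)
    have := h1.comp_hasFDerivAt x (hasFDerivAt_fst (𝕜 := ℝ) (p := x)); exact this
  have hsin2 : HasFDerivAt (fun p : ℝ × ℝ => Real.sin p.2 ^ 2) ((2 * S * C) • snd ℝ ℝ ℝ) x := by
    have h1 : HasDerivAt (fun y : ℝ => Real.sin y ^ 2) (2 * S * C) ψ := by
      have := ((Real.hasDerivAt_sin ψ).pow 2)
      simpa [mul_comm, mul_assoc, mul_left_comm, Pi.pow_def] using this
    have := h1.comp_hasFDerivAt x (hasFDerivAt_snd (𝕜 := ℝ) (p := x)); exact this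
  have hv : HasFDerivAt (fun p : ℝ × ℝ => 1 - (1 - p.1 ^ 2) * Real.sin p.2 ^ 2)
      (-((1 - k ^ 2) • ((2 * S * C) • snd ℝ ℝ ℝ) + (S ^ 2) • ((-(2 * k)) • fst ℝ ℝ ℝ))) x := by
    have := (hq.mul hsin2).const_sub 1
    have e : (fun p : ℝ × ℝ => 1 - (1 - p.1 ^ 2) * Real.sin p.2 ^ 2)
        = fun p : ℝ × ℝ => 1 - ((1 - p.1 ^ 2) * Real.sin p.2 ^ 2) := rfl
    simpa [e] using this
  -- derivative of r = sqrt v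
  have hr : HasFDerivAt (fun p : ℝ × ℝ => Real.sqrt (1 - (1 - p.1 ^ 2) * Real.sin p.2 ^ 2))
      ((1 / (2 * R)) • -((1 - k ^ 2) • ((2 * S * C) • snd ℝ ℝ ℝ)
        + (S ^ 2) • ((-(2 * k)) • fst ℝ ℝ ℝ))) x := by
    have h2 : HasDerivAt Real.sqrt (1 / (2 * R)) (1 - (1 - k ^ 2) * S ^ 2) :=
      Real.hasDerivAt_sqrt hvpos.ne'
    exact h2.comp_hasFDerivAt x hv
  -- derivative of w = p.1 / r
  have hrinv : HasFDerivAt (fun p : ℝ × ℝ =>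
        (Real.sqrt (1 - (1 - p.1 ^ 2) * Real.sin p.2 ^ 2))⁻¹)
      ((-(R ^ 2)⁻¹) • ((1 / (2 * R)) • -((1 - k ^ 2) • ((2 * S * C) • snd ℝ ℝ ℝ)
        + (S ^ 2) • ((-(2 * k)) • fst ℝ ℝ ℝ)))) x := by
    have h2 : HasDerivAt (fun y : ℝ => y⁻¹) (-(R ^ 2)⁻¹) R := by
      simpa using hasDerivAt_inv hRpos.ne'
    exact h2.comp_hasFDerivAt x hr
  have hw : HasFDerivAt (fun p : ℝ × ℝ =>
        p.1 / Real.sqrt (1 - (1 - p.1 ^ 2) * Real.sin p.2 ^ 2))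
      (k • ((-(R ^ 2)⁻¹) • ((1 / (2 * R)) • -((1 - k ^ 2) • ((2 * S * C) • snd ℝ ℝ ℝ)
        + (S ^ 2) • ((-(2 * k)) • fst ℝ ℝ ℝ)))) + R⁻¹ • fst ℝ ℝ ℝ) x := by
    have heq : (fun p : ℝ × ℝ =>
          p.1 / Real.sqrt (1 - (1 - p.1 ^ 2) * Real.sin p.2 ^ 2))
        = fun p : ℝ × ℝ =>
          p.1 * (Real.sqrt (1 - (1 - p.1 ^ 2) * Real.sin p.2 ^ 2))⁻¹ :=
      funext fun p => div_eq_mul_inv _ _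
    rw [heq]
    exact hasFDerivAt_fst.mul hrinv
  -- arccos composition
  have hwlt : k / R < 1 := by
    rw [div_lt_one hRpos]
    have h1S : (0:ℝ) < 1 - S ^ 2 := by nlinarith
    have : k ^ 2 < R ^ 2 := by rw [hRsq]; nlinarith [mul_pos hc2 h1S]
    nlinarith
  have hw0 : 0 < k / R := div_pos hk0 hRpos
  have hΦ2 : HasFDerivAt (fun p : ℝ × ℝ =>
        arccos (p.1 / Real.sqrt (1 - (1 - p.1 ^ 2) * Real.sin p.2 ^ 2)))
      ((-(1 / Real.sqrt (1 - (k / R) ^ 2))) •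
        (k • ((-(R ^ 2)⁻¹) • ((1 / (2 * R)) • -((1 - k ^ 2) • ((2 * S * C) • snd ℝ ℝ ℝ)
          + (S ^ 2) • ((-(2 * k)) • fst ℝ ℝ ℝ)))) + R⁻¹ • fst ℝ ℝ ℝ)) x :=
    by have := (Real.hasDerivAt_arccos (by linarith) hwlt.ne).comp_hasFDerivAt x hw; exact this
  -- simplify the sqrt expressions
  have hs1 : Real.sqrt (1 - (c * S) ^ 2) = R := by
    congr 1
    rw [mul_pow, hcsq]
  have hs2 : Real.sqrt (1 - (k / R) ^ 2) = c * C / R := by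
    have h : 1 - (k / R) ^ 2 = (c * C / R) ^ 2 := by
      field_simp
      linear_combination hRsq - C ^ 2 * hcsq - (1 - k ^ 2) * Real.sin_sq_add_cos_sq ψ
    rw [h]; exact Real.sqrt_sq (by positivity)
  rw [hs1] at hΦ1
  rw [hs2] at hΦ2
  have : HasFDerivAt Phi _ x := HasFDerivAt.prodMk hΦ1 hΦ2
  refine this.congr_fderiv (Eq.symm ?_)
  refine ContinuousLinearMap.ext fun p => ?_
  have e1 : (1:ℝ) / R * (c * C) = c * C / R := by ring
  apply Prod.ext
  · show (-(k * S) / (c * R)) * p.1 + (c * C / R) * p.2 = _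
    simp only [ContinuousLinearMap.prod_apply, ContinuousLinearMap.add_apply, ContinuousLinearMap.coe_smul', ContinuousLinearMap.neg_apply, ContinuousLinearMap.coe_fst', ContinuousLinearMap.coe_snd', Pi.smul_apply, smul_eq_mul]
    field_simp
    ring
  · show (-C / (c * R ^ 2)) * p.1 + (-(k * c * S) / R ^ 2) * p.2 = _
    simp only [ContinuousLinearMap.prod_apply, ContinuousLinearMap.add_apply, ContinuousLinearMap.coe_smul', ContinuousLinearMap.neg_apply, ContinuousLinearMap.coe_fst', ContinuousLinearMap.coe_snd', Pi.smul_apply, smul_eq_mul]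
    field_simp
    linear_combination p.1 * hRsq
      - p.1 * Real.sin_sq_add_cos_sq ψ
      - (C * k * S * p.2) * hcsq

lemma clm_det (L : ℝ × ℝ →L[ℝ] ℝ × ℝ) :
    L.det = (L (1,0)).1 * (L (0,1)).2 - (L (0,1)).1 * (L (1,0)).2 := by
  have h : L.det = LinearMap.det (L : ℝ × ℝ →ₗ[ℝ] ℝ × ℝ) := rfl
  rw [h, ← LinearMap.det_toMatrix (Module.Basis.finTwoProd ℝ), Matrix.det_fin_two]
  simp [LinearMap.toMatrix_apply, Module.Basis.finTwoProd_zero, Module.Basis.finTwoProd_one,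
    Module.Basis.coe_finTwoProd_repr]

lemma det_A {x : ℝ × ℝ} (hx : x ∈ Ioo (0:ℝ) 1 ×ˢ Ioo (0:ℝ) (π/2)) :
    |(A x).det| = (1 - (1 - x.1 ^ 2) * Real.sin x.2 ^ 2) ^ (-(1:ℝ)/2) := by
  obtain ⟨⟨hk0, hk1⟩, hψ0, hψ1⟩ := hx
  set k := x.1; set ψ := x.2
  have hS0 : 0 < Real.sin ψ := Real.sin_pos_of_pos_of_lt_pi hψ0 (by linarith [pi_pos])
  have hC0 : 0 < Real.cos ψ := Real.cos_pos_of_mem_Ioo ⟨by linarith [pi_pos], hψ1⟩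
  have hc2 : (0:ℝ) < 1 - k ^ 2 := by nlinarith
  have hcpos : 0 < Real.sqrt (1 - k ^ 2) := Real.sqrt_pos.2 hc2
  have hvpos : (0:ℝ) < 1 - (1 - k ^ 2) * Real.sin ψ ^ 2 := by
    nlinarith [Real.sin_sq_add_cos_sq ψ, sq_nonneg (Real.cos ψ)]
  have hRpos : 0 < Real.sqrt (1 - (1 - k ^ 2) * Real.sin ψ ^ 2) := Real.sqrt_pos.2 hvpos
  have hRsq : Real.sqrt (1 - (1 - k ^ 2) * Real.sin ψ ^ 2) ^ 2
      = 1 - (1 - k ^ 2) * Real.sin ψ ^ 2 := Real.sq_sqrt hvpos.le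
  set c := Real.sqrt (1 - k ^ 2)
  set S := Real.sin ψ
  set C := Real.cos ψ
  set R := Real.sqrt (1 - (1 - k ^ 2) * S ^ 2)
  rw [clm_det]
  have e1 : (A x (1,0)).1 = -(k * S) / (c * R) := by simp [A]; rfl
  have e2 : (A x (1,0)).2 = -C / (c * R ^ 2) := by simp [A]; rfl
  have e3 : (A x (0,1)).1 = c * C / R := by simp [A]; rfl
  have e4 : (A x (0,1)).2 = -(k * c * S) / R ^ 2 := by simp [A]; rfl
  rw [e1, e2, e3, e4]
  have hdet : -(k * S) / (c * R) * (-(k * c * S) / R ^ 2) - c * C / R * (-C / (c * R ^ 2))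
      = 1 / R := by
    have h1 : -(k * S) / (c * R) * (-(k * c * S) / R ^ 2) = k ^ 2 * S ^ 2 / R ^ 3 := by
      field_simp
    have h2 : c * C / R * (-C / (c * R ^ 2)) = -(C ^ 2 / R ^ 3) := by
      field_simp
    have hnum : k ^ 2 * S ^ 2 + C ^ 2 = R ^ 2 := by
      linear_combination -hRsq + Real.sin_sq_add_cos_sq ψ
    rw [h1, h2, sub_neg_eq_add]
    rw [← add_div, hnum]
    rw [pow_succ]
    field_simp
  rw [hdet]
  rw [abs_of_pos (by positivity)]
  rw [show (-(1:ℝ)/2) = -(1/2 : ℝ) by norm_num, Real.rpow_neg hvpos.le,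
    ← Real.sqrt_eq_rpow]
  rw [one_div]

lemma aux_facts {x : ℝ × ℝ} (hx : x ∈ Ioo (0:ℝ) 1 ×ˢ Ioo (0:ℝ) (π/2)) :
    0 < Real.sin x.2 ∧ Real.sin x.2 < 1 ∧ 0 < Real.cos x.2 ∧
    0 < Real.sqrt (1 - x.1 ^ 2) ∧
    0 < 1 - (1 - x.1 ^ 2) * Real.sin x.2 ^ 2 ∧
    x.1 < Real.sqrt (1 - (1 - x.1 ^ 2) * Real.sin x.2 ^ 2) ∧
    Real.sqrt (1 - x.1 ^ 2) * Real.sin x.2 < 1 := by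
  obtain ⟨⟨hk0, hk1⟩, hψ0, hψ1⟩ := hx
  have hS0 : 0 < Real.sin x.2 := Real.sin_pos_of_pos_of_lt_pi hψ0 (by linarith [pi_pos])
  have hS1 : Real.sin x.2 < 1 := by
    have := Real.strictMonoOn_sin ⟨by linarith [pi_pos], by linarith⟩
      ⟨by linarith [pi_pos], le_refl _⟩ hψ1
    simpa using this
  have hC0 : 0 < Real.cos x.2 := Real.cos_pos_of_mem_Ioo ⟨by linarith [pi_pos], hψ1⟩
  have hc2 : (0:ℝ) < 1 - x.1 ^ 2 := by nlinarith
  have hcpos : 0 < Real.sqrt (1 - x.1 ^ 2) := Real.sqrt_pos.2 hc2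
  have hcsq := Real.sq_sqrt hc2.le
  have hcle : Real.sqrt (1 - x.1 ^ 2) ≤ 1 := Real.sqrt_le_one.2 (by nlinarith)
  have hvpos : (0:ℝ) < 1 - (1 - x.1 ^ 2) * Real.sin x.2 ^ 2 := by nlinarith
  have hRpos := Real.sqrt_pos.2 hvpos
  have hRsq := Real.sq_sqrt hvpos.le
  refine ⟨hS0, hS1, hC0, hcpos, hvpos, ?_, by nlinarith⟩
  · have h1S : (0:ℝ) < 1 - Real.sin x.2 ^ 2 := by nlinarith
    nlinarith [hRsq, hRpos, mul_pos hc2 h1S]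

lemma Phi_cos_mul {x : ℝ × ℝ} (hx : x ∈ Ioo (0:ℝ) 1 ×ˢ Ioo (0:ℝ) (π/2)) :
    Real.cos (Phi x).1 * Real.cos (Phi x).2 = x.1 := by
  obtain ⟨hS0, hS1, hC0, hcpos, hvpos, hkR, harg⟩ := aux_facts hx
  obtain ⟨⟨hk0, hk1⟩, hψ0, hψ1⟩ := hx
  have hRpos := Real.sqrt_pos.2 hvpos
  have harg0 : 0 < Real.sqrt (1 - x.1 ^ 2) * Real.sin x.2 := mul_pos hcpos hS0
  have h1 : Real.cos (Phi x).1 = Real.sqrt (1 - (1 - x.1 ^ 2) * Real.sin x.2 ^ 2) := by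
    show Real.cos (arcsin _) = _
    rw [Real.cos_arcsin]
    congr 1
    rw [mul_pow, Real.sq_sqrt (by nlinarith : (0:ℝ) ≤ 1 - x.1 ^ 2)]
  have h2 : Real.cos (Phi x).2
      = x.1 / Real.sqrt (1 - (1 - x.1 ^ 2) * Real.sin x.2 ^ 2) := by
    show Real.cos (arccos _) = _
    rw [Real.cos_arccos]
    · linarith [div_pos hk0 hRpos]
    · rw [div_le_one hRpos]; linarith
  rw [h1, h2]
  field_simp

lemma Phi_sin_fst {x : ℝ × ℝ} (hx : x ∈ Ioo (0:ℝ) 1 ×ˢ Ioo (0:ℝ) (π/2)) :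
    Real.sin (Phi x).1 = Real.sqrt (1 - x.1 ^ 2) * Real.sin x.2 := by
  obtain ⟨hS0, hS1, hC0, hcpos, hvpos, hkR, harg⟩ := aux_facts hx
  have harg0 : 0 < Real.sqrt (1 - x.1 ^ 2) * Real.sin x.2 := mul_pos hcpos hS0
  show Real.sin (arcsin _) = _
  rw [Real.sin_arcsin (by linarith) harg.le]

lemma Phi_injOn : Set.InjOn Phi (Ioo (0:ℝ) 1 ×ˢ Ioo (0:ℝ) (π/2)) := by
  intro x hx y hy h
  have hk : x.1 = y.1 := by
    rw [← Phi_cos_mul hx, ← Phi_cos_mul hy, h]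
  have hsin : Real.sqrt (1 - x.1 ^ 2) * Real.sin x.2
      = Real.sqrt (1 - y.1 ^ 2) * Real.sin y.2 := by
    rw [← Phi_sin_fst hx, ← Phi_sin_fst hy, h]
  obtain ⟨hS0x, _, _, hcx, _, _, _⟩ := aux_facts hx
  obtain ⟨hS0y, _, _, hcy, _, _, _⟩ := aux_facts hy
  rw [hk] at hsin hcx
  have hsin2 : Real.sin x.2 = Real.sin y.2 := mul_left_cancel₀ hcx.ne' hsin
  obtain ⟨_, hx2⟩ := hx
  obtain ⟨_, hy2⟩ := hy
  have : x.2 = y.2 := by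
    apply Real.injOn_sin ⟨by linarith [pi_pos, hx2.1], by linarith [hx2.2]⟩
      ⟨by linarith [pi_pos, hy2.1], by linarith [hy2.2]⟩ hsin2
  exact Prod.ext hk this

lemma Phi_image : Phi '' (Ioo (0:ℝ) 1 ×ˢ Ioo (0:ℝ) (π/2))
    = Ioo (0:ℝ) (π/2) ×ˢ Ioo (0:ℝ) (π/2) := by
  apply Set.Subset.antisymm
  · rintro _ ⟨x, hx, rfl⟩
    obtain ⟨hS0, hS1, hC0, hcpos, hvpos, hkR, harg⟩ := aux_facts hx
    obtain ⟨⟨hk0, hk1⟩, hψ0, hψ1⟩ := hx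
    have hRpos := Real.sqrt_pos.2 hvpos
    have harg0 : 0 < Real.sqrt (1 - x.1 ^ 2) * Real.sin x.2 := mul_pos hcpos hS0
    constructor
    · exact ⟨Real.arcsin_pos.2 harg0, Real.arcsin_lt_pi_div_two.2 harg⟩
    · refine ⟨Real.arccos_pos.2 ?_, Real.arccos_lt_pi_div_two.2 (div_pos hk0 hRpos)⟩
      rw [div_lt_one hRpos]; exact hkR
  · rintro ⟨θ, φ⟩ ⟨⟨hθ0, hθ1⟩, hφ0, hφ1⟩
    have hcosθ : 0 < Real.cos θ := Real.cos_pos_of_mem_Ioo ⟨by linarith [pi_pos], hθ1⟩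
    have hcosφ : 0 < Real.cos φ := Real.cos_pos_of_mem_Ioo ⟨by linarith [pi_pos], hφ1⟩
    have hcosθ1 : Real.cos θ ≤ 1 := Real.cos_le_one θ
    have hcosφ1 : Real.cos φ < 1 := by
      have := Real.strictAntiOn_cos ⟨le_refl (0:ℝ), Real.pi_pos.le⟩
        ⟨hφ0.le, by linarith [pi_pos]⟩ hφ0
      simpa using this
    have hsinθ : 0 < Real.sin θ := Real.sin_pos_of_pos_of_lt_pi hθ0 (by linarith [pi_pos])
    set k := Real.cos θ * Real.cos φ with hkdef
    have hk0 : 0 < k := mul_pos hcosθ hcosφ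
    have hk1 : k < 1 := by nlinarith
    have hc2 : (0:ℝ) < 1 - k ^ 2 := by nlinarith
    have hcsq := Real.sq_sqrt hc2.le
    have hcpos := Real.sqrt_pos.2 hc2
    -- sin θ < √(1 - k²)
    have hslt : Real.sin θ < Real.sqrt (1 - k ^ 2) := by
      have h1 : Real.sin θ ^ 2 < 1 - k ^ 2 := by
        have h2 : (0:ℝ) < 1 - Real.cos φ ^ 2 := by nlinarith
        nlinarith [Real.sin_sq_add_cos_sq θ, mul_pos (mul_pos hcosθ hcosθ) h2]
      nlinarith [Real.sin_nonneg_of_nonneg_of_le_pi (le_of_lt hθ0)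
        (by linarith [pi_pos]) , hcpos, hcsq, Real.sqrt_nonneg (1 - k^2)]
    set ψ := arcsin (Real.sin θ / Real.sqrt (1 - k ^ 2)) with hψdef
    have hrat0 : 0 < Real.sin θ / Real.sqrt (1 - k ^ 2) := div_pos hsinθ hcpos
    have hrat1 : Real.sin θ / Real.sqrt (1 - k ^ 2) < 1 := (div_lt_one hcpos).2 hslt
    refine ⟨(k, ψ), ⟨⟨hk0, hk1⟩, Real.arcsin_pos.2 hrat0,
      Real.arcsin_lt_pi_div_two.2 hrat1⟩, ?_⟩
    have hsψ : Real.sin ψ = Real.sin θ / Real.sqrt (1 - k ^ 2) :=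
      Real.sin_arcsin (by linarith) hrat1.le
    have hv : 1 - (1 - k ^ 2) * Real.sin ψ ^ 2 = Real.cos θ ^ 2 := by
      rw [hsψ, div_pow, Real.sq_sqrt hc2.le]
      field_simp
      nlinarith [Real.sin_sq_add_cos_sq θ]
    show (arcsin (Real.sqrt (1 - k ^ 2) * Real.sin ψ),
        arccos (k / Real.sqrt (1 - (1 - k ^ 2) * Real.sin ψ ^ 2))) = (θ, φ)
    rw [hv, hsψ]
    have h1 : Real.sqrt (1 - k ^ 2) * (Real.sin θ / Real.sqrt (1 - k ^ 2)) = Real.sin θ := by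
      field_simp
    rw [h1, Real.arcsin_sin (by linarith [pi_pos]) (by linarith)]
    have h2 : Real.sqrt (Real.cos θ ^ 2) = Real.cos θ := Real.sqrt_sq hcosθ.le
    rw [h2, hkdef]
    have h3 : Real.cos θ * Real.cos φ / Real.cos θ = Real.cos φ := by
      field_simp
    rw [h3, Real.arccos_cos (by linarith [pi_pos]) (by linarith [pi_pos])]

noncomputable def W (x : ℝ × ℝ) : ℝ :=
  (1 - (1 - x.1 ^ 2) * Real.sin x.2 ^ 2) ^ (-(1:ℝ)/2)

lemma cov (F : ℝ → ℝ) (hF : ContinuousOn F (Set.Icc 0 1)) :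
    IntegrableOn (fun x : ℝ × ℝ => W x * F x.1) (Ioo (0:ℝ) 1 ×ˢ Ioo 0 (π/2)) ∧
    ∫ y in Ioo (0:ℝ) (π/2) ×ˢ Ioo 0 (π/2), F (Real.cos y.1 * Real.cos y.2)
      = ∫ x in Ioo (0:ℝ) 1 ×ˢ Ioo 0 (π/2), W x * F x.1 := by
  have hs : MeasurableSet (Ioo (0:ℝ) 1 ×ˢ Ioo (0:ℝ) (π/2)) :=
    (isOpen_Ioo.prod isOpen_Ioo).measurableSet
  have hderiv : ∀ x ∈ Ioo (0:ℝ) 1 ×ˢ Ioo (0:ℝ) (π/2),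
      HasFDerivWithinAt Phi (A x) (Ioo (0:ℝ) 1 ×ˢ Ioo (0:ℝ) (π/2)) x :=
    fun x hx => (hasFDerivAt_Phi hx).hasFDerivWithinAt
  set g : ℝ × ℝ → ℝ := fun y => F (Real.cos y.1 * Real.cos y.2) with hg
  have hgc : ContinuousOn g (Icc (0:ℝ) (π/2) ×ˢ Icc (0:ℝ) (π/2)) := by
    apply hF.comp ((Real.continuous_cos.comp continuous_fst).mul
      (Real.continuous_cos.comp continuous_snd)).continuousOn
    rintro ⟨θ, φ⟩ ⟨hθ, hφ⟩
    show Real.cos θ * Real.cos φ ∈ Icc (0:ℝ) 1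
    have h1 : 0 ≤ Real.cos θ := Real.cos_nonneg_of_mem_Icc ⟨by linarith [hθ.1, pi_pos], by linarith [hθ.2]⟩
    have h2 : 0 ≤ Real.cos φ := Real.cos_nonneg_of_mem_Icc ⟨by linarith [hφ.1, pi_pos], by linarith [hφ.2]⟩
    constructor
    · exact mul_nonneg h1 h2
    · nlinarith [Real.cos_le_one θ, Real.cos_le_one φ]
  have hg_int : IntegrableOn g (Ioo (0:ℝ) (π/2) ×ˢ Ioo 0 (π/2)) := by
    apply (hgc.integrableOn_compact (isCompact_Icc.prod isCompact_Icc)).mono_set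
    exact Set.prod_mono Ioo_subset_Icc_self Ioo_subset_Icc_self
  have hEq : Set.EqOn (fun x => |(A x).det| • g (Phi x))
      (fun x : ℝ × ℝ => W x * F x.1) (Ioo (0:ℝ) 1 ×ˢ Ioo (0:ℝ) (π/2)) := by
    intro x hx
    simp only [smul_eq_mul]
    rw [det_A hx, hg]
    simp only
    rw [Phi_cos_mul hx]
    rfl
  constructor
  · have h1 := integrableOn_image_iff_integrableOn_abs_det_fderiv_smul volume hs hderiv Phi_injOn g
    rw [Phi_image] at h1
    exact (h1.1 hg_int).congr_fun hEq hs
  · have h2 := integral_image_eq_integral_abs_det_fderiv_smul volume hs hderiv Phi_injOn g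
    rw [Phi_image] at h2
    rw [h2]
    exact setIntegral_congr_fun hs hEq

lemma Kel'_eq {k : ℝ} (hk : k ∈ Ioo (0:ℝ) 1) :
    Kel' k = ∫ ψ in Ioo (0:ℝ) (π/2), (1 - (1 - k ^ 2) * Real.sin ψ ^ 2) ^ (-(1:ℝ)/2) := by
  obtain ⟨hk0, hk1⟩ := hk
  have hc2 : (0:ℝ) ≤ 1 - k ^ 2 := by nlinarith
  have h1 : Kel' k = ∫ θ in (0:ℝ)..(π/2), (1 - (1 - k ^ 2) * Real.sin θ ^ 2) ^ (-(1:ℝ)/2) := by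
    rw [Kel', Kel]
    congr 1
    funext θ
    rw [Real.sq_sqrt hc2]
  rw [h1, intervalIntegral.integral_of_le (by positivity : (0:ℝ) ≤ π/2),
    integral_Ioc_eq_integral_Ioo]

lemma W_cont {k : ℝ} (hk : k ∈ Ioo (0:ℝ) 1) :
    Continuous fun ψ : ℝ => (1 - (1 - k ^ 2) * Real.sin ψ ^ 2) ^ (-(1:ℝ)/2) := by
  obtain ⟨hk0, hk1⟩ := hk
  apply Continuous.rpow_const
  · continuity
  · intro ψ
    left
    have h1 : (0:ℝ) ≤ 1 - k ^ 2 := by nlinarith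
    have h2 : (1 - k ^ 2) * Real.sin ψ ^ 2 ≤ 1 - k ^ 2 :=
      mul_le_of_le_one_right h1 (Real.sin_sq_le_one ψ)
    have h3 : (0:ℝ) < 1 - (1 - k ^ 2) * Real.sin ψ ^ 2 := by nlinarith
    exact h3.ne'

lemma fubini_step (F : ℝ → ℝ) (hF : ContinuousOn F (Set.Icc 0 1)) :
    IntegrableOn (fun k : ℝ => F k * Kel' k) (Ioo (0:ℝ) 1) ∧
    ∫ x in Ioo (0:ℝ) 1 ×ˢ Ioo 0 (π/2), W x * F x.1
      = ∫ k in Ioo (0:ℝ) 1, F k * Kel' k := by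
  set μ := volume.restrict (Ioo (0:ℝ) 1)
  set ν := volume.restrict (Ioo (0:ℝ) (π/2))
  have hprod : (volume : Measure (ℝ × ℝ)).restrict (Ioo (0:ℝ) 1 ×ˢ Ioo 0 (π/2))
      = μ.prod ν := by
    rw [Measure.volume_eq_prod, Measure.prod_restrict]
  have hInt : Integrable (fun z : ℝ × ℝ => W z * F z.1) (μ.prod ν) := by
    rw [← hprod]; exact (cov F hF).1
  have heq : ∀ k ∈ Ioo (0:ℝ) 1,
      (∫ ψ, W (k, ψ) * F k ∂ν) = F k * Kel' k := by
    intro k hk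
    rw [integral_mul_const, Kel'_eq hk]
    rw [mul_comm]
    rfl
  have hae : (fun k => ∫ ψ, W (k, ψ) * F k ∂ν) =ᵐ[μ] fun k => F k * Kel' k := by
    filter_upwards [self_mem_ae_restrict measurableSet_Ioo] with k hk
    exact heq k hk
  constructor
  · exact (hInt.integral_prod_left).congr hae
  · rw [hprod, integral_prod _ hInt]
    exact integral_congr_ae hae

lemma quarter (G : ℝ → ℝ) (hg : Continuous fun u => G |Real.cos u|) :
    ∫ t in (0:ℝ)..1, G |Real.cos (2 * π * t)|
      = 2/π * ∫ θ in (0:ℝ)..(π/2), G (Real.cos θ) := by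
  set g : ℝ → ℝ := fun u => G |Real.cos u| with hgdef
  have hπ : (0:ℝ) < π := pi_pos
  have hii : ∀ a b : ℝ, IntervalIntegrable g volume a b :=
    fun a b => hg.intervalIntegrable a b
  -- step 1 : substitute u = 2πt
  have h1 : ∫ t in (0:ℝ)..1, g (2 * π * t) = (1/(2*π)) * ∫ u in (0:ℝ)..(2*π), g u := by
    have := intervalIntegral.smul_integral_comp_mul_left g (2*π) (a := 0) (b := 1)
    rw [mul_zero, mul_one] at this
    rw [← this, smul_eq_mul]
    field_simp
  -- step 2 : periodicity, period π
  have hper : Function.Periodic g π := by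
    intro u
    simp only [hgdef, Real.cos_add_pi, abs_neg]
  have h2 : ∫ u in π..(2*π), g u = ∫ u in (0:ℝ)..π, g u := by
    have := hper.intervalIntegral_add_eq π 0
    simpa [two_mul] using this
  have h3 : ∫ u in (0:ℝ)..(2*π), g u = 2 * ∫ u in (0:ℝ)..π, g u := by
    rw [← intervalIntegral.integral_add_adjacent_intervals (hii 0 π) (hii π (2*π))]
    rw [h2]; ring
  -- step 3 : reflection on [π/2, π]
  have h4 : ∫ u in (π/2)..π, g u = ∫ u in (0:ℝ)..(π/2), g u := by
    have := intervalIntegral.integral_comp_sub_left (a := 0) (b := π/2) g π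
    have e : π - π/2 = π/2 := by ring
    rw [e, sub_zero] at this
    rw [← this]
    apply intervalIntegral.integral_congr
    intro u hu
    simp only [hgdef, Real.cos_pi_sub, abs_neg]
  have h5 : ∫ u in (0:ℝ)..π, g u = 2 * ∫ u in (0:ℝ)..(π/2), g u := by
    rw [← intervalIntegral.integral_add_adjacent_intervals (hii 0 (π/2)) (hii (π/2) π)]
    rw [h4]; ring
  -- step 4 : drop the absolute value on [0, π/2]
  have h6 : ∫ u in (0:ℝ)..(π/2), g u = ∫ θ in (0:ℝ)..(π/2), G (Real.cos θ) := by
    apply intervalIntegral.integral_congr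
    intro u hu
    rw [Set.uIcc_of_le (by positivity)] at hu
    simp only [hgdef]
    rw [abs_of_nonneg (Real.cos_nonneg_of_mem_Icc ⟨by linarith [hu.1], by linarith [hu.2]⟩)]
  show ∫ t in (0:ℝ)..1, g (2 * π * t) = _
  rw [h1, h3, h5, h6]
  field_simp

noncomputable def Hfun (F : ℝ → ℝ) (x : ℝ) : ℝ :=
  ∫ σ in (0:ℝ)..(π/2), F (min |x| 1 * |Real.cos σ|)

lemma Hfun_cont (F : ℝ → ℝ) (hF : ContinuousOn F (Set.Icc 0 1)) :
    Continuous (Hfun F) := by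
  apply intervalIntegral.continuous_parametric_intervalIntegral_of_continuous'
    (μ := volume) (f := fun x σ => F (min |x| 1 * |Real.cos σ|))
  apply hF.comp_continuous
  · apply Continuous.mul
    · exact (continuous_abs.comp continuous_fst).min continuous_const
    · exact continuous_abs.comp (Real.continuous_cos.comp continuous_snd)
  · rintro ⟨x, σ⟩
    simp only
    constructor
    · positivity
    · have h1 : min |x| 1 ≤ 1 := min_le_right _ _
      have h2 : |Real.cos σ| ≤ 1 := Real.abs_cos_le_one σ
      have h0 : (0:ℝ) ≤ min |x| 1 := le_min (abs_nonneg x) zero_le_one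
      nlinarith

lemma Hfun_eval (F : ℝ → ℝ) {c : ℝ} (hc : |c| ≤ 1) :
    Hfun F c = ∫ σ in (0:ℝ)..(π/2), F (|c| * Real.cos σ) := by
  rw [Hfun]
  apply intervalIntegral.integral_congr
  intro σ hσ
  rw [Set.uIcc_of_le (by positivity : (0:ℝ) ≤ π/2)] at hσ
  show F (min |c| 1 * |Real.cos σ|) = F (|c| * Real.cos σ)
  rw [min_eq_left hc,
    abs_of_nonneg (Real.cos_nonneg_of_mem_Icc ⟨by linarith [hσ.1, pi_pos], by linarith [hσ.2]⟩)]

lemma inner_eq (F : ℝ → ℝ) (hF : ContinuousOn F (Set.Icc 0 1)) (t : ℝ) :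
    ∫ s in (0:ℝ)..1, F |Real.cos (2 * π * t) * Real.cos (2 * π * s)|
      = 2/π * Hfun F (Real.cos (2 * π * t)) := by
  set c := Real.cos (2 * π * t)
  have hc : |c| ≤ 1 := Real.abs_cos_le_one _
  have h0 : ∫ s in (0:ℝ)..1, F |c * Real.cos (2 * π * s)|
      = ∫ s in (0:ℝ)..1, F (|c| * |Real.cos (2 * π * s)|) := by
    simp only [abs_mul]
  rw [h0]
  have hq := quarter (fun x => F (|c| * x)) ?hcont
  case hcont =>
    apply hF.comp_continuous
    · exact continuous_const.mul (continuous_abs.comp Real.continuous_cos)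
    · intro u
      constructor
      · positivity
      · have := Real.abs_cos_le_one u
        nlinarith [abs_nonneg c, abs_nonneg (Real.cos u)]
  rw [hq, Hfun_eval F hc]


/-- for continuous F : [0,1] → ℝ,
    ∫₀¹∫₀¹ F(|cos(2πt)cos(2πs)|) ds dt = (4/π²)·∫₀¹ F(k)K'(k) dk,
    the right-hand integral being a convergent Lebesgue integral on (0,1). -/
theorem density_integral_formula (F : ℝ → ℝ) (hF : ContinuousOn F (Set.Icc 0 1)) :
    IntegrableOn (fun k : ℝ => F k * Kel' k) (Set.Ioo 0 1) ∧
    (∫ t in (0:ℝ)..1, ∫ s in (0:ℝ)..1,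
        F |Real.cos (2 * Real.pi * t) * Real.cos (2 * Real.pi * s)|) =
      4 / Real.pi ^ 2 * ∫ k in Set.Ioo (0:ℝ) 1, F k * Kel' k := by
  have hπ := pi_pos
  refine ⟨(fubini_step F hF).1, ?_⟩
  -- reduce inner integrals
  have h1 : (∫ t in (0:ℝ)..1, ∫ s in (0:ℝ)..1,
        F |Real.cos (2 * π * t) * Real.cos (2 * π * s)|)
      = ∫ t in (0:ℝ)..1, 2/π * Hfun F (Real.cos (2 * π * t)) := by
    apply intervalIntegral.integral_congr
    intro t _
    exact inner_eq F hF t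
  rw [h1, intervalIntegral.integral_const_mul]
  -- outer reduction via quarter
  have habs : ∀ t : ℝ, Hfun F (Real.cos (2 * π * t)) = Hfun F |Real.cos (2 * π * t)| := by
    intro t; simp only [Hfun, abs_abs]
  have h2 : ∫ t in (0:ℝ)..1, Hfun F (Real.cos (2 * π * t))
      = ∫ t in (0:ℝ)..1, Hfun F |Real.cos (2 * π * t)| := by
    apply intervalIntegral.integral_congr
    intro t _
    exact habs t
  rw [h2, quarter (Hfun F) ((Hfun_cont F hF).comp (continuous_abs.comp Real.continuous_cos))]
  -- now : 2/π * (2/π * ∫ θ in 0..π/2, Hfun F (cos θ))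
  have h3 : ∫ θ in (0:ℝ)..(π/2), Hfun F (Real.cos θ)
      = ∫ θ in (0:ℝ)..(π/2), ∫ σ in (0:ℝ)..(π/2), F (Real.cos θ * Real.cos σ) := by
    apply intervalIntegral.integral_congr
    intro θ hθ
    rw [Set.uIcc_of_le (by positivity : (0:ℝ) ≤ π/2)] at hθ
    have hcθ : 0 ≤ Real.cos θ := Real.cos_nonneg_of_mem_Icc ⟨by linarith [hθ.1], by linarith [hθ.2]⟩
    show Hfun F (Real.cos θ) = ∫ σ in (0:ℝ)..(π/2), F (Real.cos θ * Real.cos σ)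
    rw [Hfun_eval F (by rw [abs_of_nonneg hcθ]; exact Real.cos_le_one θ), abs_of_nonneg hcθ]
  rw [h3]
  -- iterated to product integral
  set g : ℝ × ℝ → ℝ := fun y => F (Real.cos y.1 * Real.cos y.2) with hg
  have hgc : ContinuousOn g (Icc (0:ℝ) (π/2) ×ˢ Icc (0:ℝ) (π/2)) := by
    apply hF.comp ((Real.continuous_cos.comp continuous_fst).mul
      (Real.continuous_cos.comp continuous_snd)).continuousOn
    rintro ⟨θ, φ⟩ ⟨hθ, hφ⟩
    show Real.cos θ * Real.cos φ ∈ Icc (0:ℝ) 1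
    have h1 : 0 ≤ Real.cos θ := Real.cos_nonneg_of_mem_Icc ⟨by linarith [hθ.1, pi_pos], by linarith [hθ.2]⟩
    have h2 : 0 ≤ Real.cos φ := Real.cos_nonneg_of_mem_Icc ⟨by linarith [hφ.1, pi_pos], by linarith [hφ.2]⟩
    constructor
    · exact mul_nonneg h1 h2
    · nlinarith [Real.cos_le_one θ, Real.cos_le_one φ]
  have hg_int : IntegrableOn g (Ioo (0:ℝ) (π/2) ×ˢ Ioo 0 (π/2)) := by
    apply (hgc.integrableOn_compact (isCompact_Icc.prod isCompact_Icc)).mono_set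
    exact Set.prod_mono Ioo_subset_Icc_self Ioo_subset_Icc_self
  have hprod : (volume : Measure (ℝ × ℝ)).restrict (Ioo (0:ℝ) (π/2) ×ˢ Ioo 0 (π/2))
      = (volume.restrict (Ioo (0:ℝ) (π/2))).prod (volume.restrict (Ioo (0:ℝ) (π/2))) := by
    rw [Measure.volume_eq_prod, Measure.prod_restrict]
  have hg_int' : Integrable g ((volume.restrict (Ioo (0:ℝ) (π/2))).prod
      (volume.restrict (Ioo (0:ℝ) (π/2)))) := by
    rw [← hprod]; exact hg_int
  have h4 : ∫ θ in (0:ℝ)..(π/2), ∫ σ in (0:ℝ)..(π/2), F (Real.cos θ * Real.cos σ)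
      = ∫ y in Ioo (0:ℝ) (π/2) ×ˢ Ioo 0 (π/2), g y := by
    rw [hprod, integral_prod _ hg_int']
    rw [intervalIntegral.integral_of_le (by positivity : (0:ℝ) ≤ π/2),
      integral_Ioc_eq_integral_Ioo]
    apply setIntegral_congr_fun measurableSet_Ioo
    intro θ _
    show (∫ σ in (0:ℝ)..(π/2), F (Real.cos θ * Real.cos σ))
        = ∫ y in Ioo (0:ℝ) (π/2), g (θ, y)
    rw [intervalIntegral.integral_of_le (by positivity : (0:ℝ) ≤ π/2),
      integral_Ioc_eq_integral_Ioo]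
  rw [h4, (cov F hF).2, (fubini_step F hF).2]
  field_simp
  ring
end
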